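/- Let G be a group with left-invariant metric d, H a compact subgroup of G that is invariant under every element of a group A of isometric automorphisms of G, and suppose A acts oligomorphically on the coset space G/H (finitely many orbits on (G/H)ⁿ for each n). Then the action of A on (G, d) is approximately oligomorphic: for every n ≥ 1 and ε > 0 there is a finite set F ⊆ Gⁿ such that A·F is ε-dense in (Gⁿ, max-metric). -/
import Mathlib


/-- If `A` is a group of isometric automorphisms of `(G,d)`
leaving a compact subgroup `H` invariant and acting oligomorphically on the
coset space `G ⧸ H`, then the action of `A` on `(G,d)` is approximately
oligomorphic. -/
theorem approximately_oligomorphic_of_oligomorphic_on_quotient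
    {G : Type*} [Group G] [MetricSpace G]
    (hleft : ∀ g x y : G, dist (g * x) (g * y) = dist x y)
    (A : Subgroup (MulAut G))
    (hAiso : ∀ φ ∈ A, Isometry (φ : G → G))
    (H : Subgroup G)
    (hHcompact : IsCompact (H : Set G))
    (hHinv : ∀ φ ∈ A, ∀ h ∈ H, φ h ∈ H)
    (holig : ∀ n : ℕ, ∃ F : Finset (Fin n → G),
      ∀ x : Fin n → G, ∃ f ∈ F, ∃ φ ∈ A,
        ∀ i, ((φ (f i) : G) : G ⧸ H) = ((x i : G) : G ⧸ H)) :
    ∀ n : ℕ, ∀ ε > (0 : ℝ), ∃ F : Finset (Fin n → G),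
      ∀ x : Fin n → G, ∃ f ∈ F, ∃ φ ∈ A,
        ∀ i, dist (φ (f i)) (x i) < ε := by
  classical
  intro n ε hε
  obtain ⟨F₂, hF₂⟩ := holig n
  obtain ⟨t, htfin, htcover⟩ :=
    Metric.totallyBounded_iff.mp hHcompact.totallyBounded ε hε
  set Nfin := htfin.toFinset with hNfin
  refine ⟨(F₂ ×ˢ Fintype.piFinset fun _ => Nfin).image
      (fun p => fun i => p.1 i * p.2 i), ?_⟩
  intro x
  obtain ⟨f, hf, φ, hφ, hcos⟩ := hF₂ x
  have hiso := hAiso φ hφ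
  have hinvmem : (φ⁻¹ : MulAut G) ∈ A := A.inv_mem hφ
  have hmem : ∀ i, (φ⁻¹ : MulAut G) ((φ (f i))⁻¹ * x i) ∈ H := by
    intro i
    refine hHinv _ hinvmem _ ?_
    have := hcos i
    rwa [QuotientGroup.eq] at this
  have hc : ∀ i, ∃ c ∈ Nfin, dist ((φ⁻¹ : MulAut G) ((φ (f i))⁻¹ * x i)) c < ε := by
    intro i
    have := htcover (hmem i)
    simp only [Set.mem_iUnion, Metric.mem_ball] at this
    obtain ⟨c, hc1, hc2⟩ := this
    exact ⟨c, htfin.mem_toFinset.mpr hc1, hc2⟩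
  choose c hc1 hc2 using hc
  refine ⟨fun i => f i * c i, ?_, φ, hφ, ?_⟩
  · refine Finset.mem_image.mpr ⟨(f, c), Finset.mem_product.mpr ⟨hf, ?_⟩, rfl⟩
    exact Fintype.mem_piFinset.mpr hc1
  · intro i
    have h1 : φ (f i * c i) = φ (f i) * φ (c i) := map_mul φ _ _
    have h2 : x i = φ (f i) * ((φ (f i))⁻¹ * x i) := by group
    calc dist (φ (f i * c i)) (x i)
        = dist (φ (f i) * φ (c i)) (φ (f i) * ((φ (f i))⁻¹ * x i)) := by
          rw [h1, ← h2]
      _ = dist (φ (c i)) ((φ (f i))⁻¹ * x i) := hleft _ _ _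
      _ = dist (φ (c i)) (φ ((φ⁻¹ : MulAut G) ((φ (f i))⁻¹ * x i))) := by
          simp
      _ = dist (c i) ((φ⁻¹ : MulAut G) ((φ (f i))⁻¹ * x i)) := hiso.dist_eq _ _
      _ < ε := by rw [dist_comm]; exact hc2 i
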